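/- Let R be a commutative Krasner hyperring with nonzero identity, let φ : L(R) → L(R) ∪ {∅} be a function, and let T be a proper hyperideal of R that is φ-primary. If T is not a primary hyperideal, then T² ⊆ φ(T); equivalently, if T² ⊄ φ(T), then T is a primary hyperideal of R. -/

import Mathlib

universe u

/-- A commutative Krasner hyperring with nonzero identity. -/
class KrasnerHyperring (R : Type u) where
  hadd : R → R → Set R
  mul : R → R → R
  zero : R
  one : R
  neg : R → R
  hadd_nonempty : ∀ a b : R, (hadd a b).Nonempty
  hadd_comm : ∀ a b : R, hadd a b = hadd b a
  hadd_assoc : ∀ a b c : R, (⋃ x ∈ hadd a b, hadd x c) = ⋃ y ∈ hadd b c, hadd a y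
  hadd_zero : ∀ a : R, hadd a zero = {a}
  zero_mem_hadd_neg : ∀ a : R, zero ∈ hadd a (neg a)
  neg_unique : ∀ a b : R, zero ∈ hadd a b → b = neg a
  reversible : ∀ a b c : R, c ∈ hadd a b → b ∈ hadd (neg a) c
  mul_assoc : ∀ a b c : R, mul (mul a b) c = mul a (mul b c)
  mul_comm : ∀ a b : R, mul a b = mul b a
  mul_one : ∀ a : R, mul a one = a
  mul_zero : ∀ a : R, mul a zero = zero
  one_ne_zero : one ≠ zero
  distrib : ∀ a b c : R, (fun x => mul a x) '' hadd b c = hadd (mul a b) (mul a c)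

namespace KrasnerHyperring

variable {R : Type u} [KrasnerHyperring R]

/-- A hyperideal of a Krasner hyperring. -/
structure Hyperideal (R : Type u) [KrasnerHyperring R] where
  carrier : Set R
  nonempty' : carrier.Nonempty
  hadd_subset' : ∀ a ∈ carrier, ∀ b ∈ carrier, hadd a b ⊆ carrier
  neg_mem' : ∀ a ∈ carrier, neg a ∈ carrier
  mul_mem' : ∀ r : R, ∀ a ∈ carrier, mul r a ∈ carrier

instance : SetLike (Hyperideal R) R where
  coe := Hyperideal.carrier
  coe_injective := by rintro ⟨⟩ ⟨⟩ h; congr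

/-- A hyperideal is proper if it is not the whole hyperring. -/
def Hyperideal.IsProper (N : Hyperideal R) : Prop := (N : Set R) ≠ Set.univ

/-- `A ⊕ B` for subsets. -/
def haddSet (A B : Set R) : Set R := ⋃ a ∈ A, ⋃ b ∈ B, hadd a b

/-- `A ∘ B` : set of all products. -/
def mulSet (A B : Set R) : Set R := {x : R | ∃ a ∈ A, ∃ b ∈ B, x = mul a b}

/-- The hyperideal generated by a set (as a set). -/
def genIdeal (S : Set R) : Set R := ⋂₀ {C : Set R | (∃ I : Hyperideal R, C = ↑I) ∧ S ⊆ C}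

/-- Products of `n` elements of `S`. -/
def setPow (S : Set R) : ℕ → Set R
  | 0 => Set.univ
  | 1 => S
  | (n+2) => mulSet S (setPow S (n+1))

/-- `N^n` : the hyperideal generated by products of `n` elements of `N`. -/
def idealPow (N : Hyperideal R) (n : ℕ) : Set R := genIdeal (setPow (↑N) n)

/-- Powers of an element. -/
def hpow (a : R) : ℕ → R
  | 0 => one
  | (n+1) => mul a (hpow a n)

/-- The radical of a set. -/
def radical (A : Set R) : Set R := {a : R | ∃ n : ℕ, 0 < n ∧ hpow a n ∈ A}

/-- `(A : a)`. -/
def colon (A : Set R) (a : R) : Set R := {r : R | mul a r ∈ A}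

/-- `(A : M)` for a set `M`. -/
def colonSet (A B : Set R) : Set R := {r : R | ∀ b ∈ B, mul r b ∈ A}

/-- Prime hyperideal. -/
def IsPrime (N : Hyperideal R) : Prop :=
  N.IsProper ∧ ∀ a b : R, mul a b ∈ N → a ∈ N ∨ b ∈ N

/-- Weakly prime hyperideal. -/
def IsWeaklyPrime (N : Hyperideal R) : Prop :=
  N.IsProper ∧ ∀ a b : R, mul a b ∈ N → mul a b ≠ zero → a ∈ N ∨ b ∈ N

/-- `φ`-prime hyperideal. -/
def IsPhiPrime (φ : Hyperideal R → Set R) (N : Hyperideal R) : Prop :=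
  N.IsProper ∧ ∀ a b : R, mul a b ∈ N → mul a b ∉ φ N → a ∈ N ∨ b ∈ N

/-- Primary hyperideal. -/
def IsPrimary (N : Hyperideal R) : Prop :=
  N.IsProper ∧ ∀ a b : R, mul a b ∈ N → a ∈ N ∨ ∃ k : ℕ, 0 < k ∧ hpow b k ∈ N

/-- `φ`-primary hyperideal. -/
def IsPhiPrimary (φ : Hyperideal R → Set R) (N : Hyperideal R) : Prop :=
  N.IsProper ∧ ∀ a b : R, mul a b ∈ N → mul a b ∉ φ N →
    a ∈ N ∨ ∃ k : ℕ, 0 < k ∧ hpow b k ∈ N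

/-- `δ`-primary hyperideal. -/
def IsDeltaPrimary (δ : Hyperideal R → Hyperideal R) (N : Hyperideal R) : Prop :=
  N.IsProper ∧ ∀ a b : R, mul a b ∈ N → a ∈ N ∨ b ∈ δ N

/-- `φ`-`δ`-primary hyperideal. -/
def IsPhiDeltaPrimary (φ : Hyperideal R → Set R) (δ : Hyperideal R → Hyperideal R)
    (N : Hyperideal R) : Prop :=
  N.IsProper ∧ ∀ a b : R, mul a b ∈ N → mul a b ∉ φ N → a ∈ N ∨ b ∈ δ N

/-- `φ : L(R) → L(R) ∪ {∅}` : every value is a hyperideal or the empty set. -/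
def MapsToIdealOrEmpty (φ : Hyperideal R → Set R) : Prop :=
  ∀ I : Hyperideal R, φ I = ∅ ∨ ∃ J : Hyperideal R, φ I = ↑J

/-- A reduction function. -/
def IsReduction (φ : Hyperideal R → Set R) : Prop :=
  MapsToIdealOrEmpty φ ∧ (∀ I : Hyperideal R, φ I ⊆ ↑I) ∧
    ∀ I J : Hyperideal R, (I : Set R) ⊆ ↑J → φ I ⊆ φ J

/-- An expansion function. -/
def IsExpansion (δ : Hyperideal R → Hyperideal R) : Prop :=
  (∀ I : Hyperideal R, (I : Set R) ⊆ ↑(δ I)) ∧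
    ∀ I J : Hyperideal R, (I : Set R) ⊆ ↑J → (δ I : Set R) ⊆ ↑(δ J)

/-- `φ_w(N) = ⋂_{n ≥ 1} N^n`. -/
def phiW (N : Hyperideal R) : Set R := ⋂ (n : ℕ) (_ : 1 ≤ n), idealPow N n

lemma zero_mem (N : Hyperideal R) : zero ∈ N := by
  obtain ⟨a, ha⟩ := N.nonempty'
  exact N.hadd_subset' a ha (neg a) (N.neg_mem' a ha) (zero_mem_hadd_neg a)

lemma proper_of_subset_proper {M T : Hyperideal R} (h : (M : Set R) ⊆ ↑T)
    (hT : T.IsProper) : M.IsProper :=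
  fun hu => hT (Set.univ_subset_iff.mp (hu ▸ h))

lemma mul_mem_hadd_of_mem {a b c x : R} (hx : x ∈ hadd b c) :
    mul a x ∈ hadd (mul a b) (mul a c) := by
  rw [← distrib a b c]; exact ⟨x, hx, rfl⟩

lemma mul_neg_eq (a b : R) : mul a (neg b) = neg (mul a b) := by
  apply neg_unique
  have := mul_mem_hadd_of_mem (a := a) (zero_mem_hadd_neg b)
  rwa [mul_zero a] at this

/-- Re-associating: if `z ∈ (a ⊕ b) ⊕ c`, then `z ∈ a ⊕ u` for some `u ∈ b ⊕ c`. -/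
lemma hadd_reassoc {a b c w z : R} (hw : w ∈ hadd a b) (hz : z ∈ hadd w c) :
    ∃ u ∈ hadd b c, z ∈ hadd a u := by
  have hmem : z ∈ ⋃ x ∈ hadd a b, hadd x c :=
    Set.mem_biUnion hw hz
  rw [hadd_assoc a b c] at hmem
  simpa using hmem

lemma hadd_mem_ideal {N : Hyperideal R} {a b z : R} (ha : a ∈ N) (hb : b ∈ N)
    (hz : z ∈ hadd a b) : z ∈ N := N.hadd_subset' a ha b hb hz

/-- If `b ∈ y ⊕ t` with `t ∈ T`, then `b^k ∈ y^k ⊕ s` for some `s ∈ T`. -/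
lemma hpow_mem_hadd_pow {T : Hyperideal R} {b y t : R} (ht : t ∈ T)
    (hb : b ∈ hadd y t) : ∀ k : ℕ, ∃ s ∈ T, hpow b k ∈ hadd (hpow y k) s := by
  intro k
  induction k with
  | zero =>
      refine ⟨zero, zero_mem T, ?_⟩
      show one ∈ hadd one zero
      rw [hadd_zero]; exact rfl
  | succ n ih =>
      obtain ⟨s, hs, hmem⟩ := ih
      -- hpow b (n+1) = mul b (hpow b n)
      have h1 : mul b (hpow b n) ∈ hadd (mul b (hpow y n)) (mul b s) :=
        mul_mem_hadd_of_mem hmem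
      -- mul b (hpow y n) ∈ hadd (hpow y (n+1)) (mul t (hpow y n))
      have h2 : mul b (hpow y n) ∈ hadd (mul y (hpow y n)) (mul t (hpow y n)) := by
        have := mul_mem_hadd_of_mem (a := hpow y n) hb
        rwa [mul_comm (hpow y n) b, mul_comm (hpow y n) y,
          mul_comm (hpow y n) t] at this
      -- reassociate
      obtain ⟨u, hu, hzu⟩ := hadd_reassoc h2 h1
      refine ⟨u, ?_, hzu⟩
      -- u ∈ hadd (mul t (hpow y n)) (mul b s) ⊆ T
      have h3 : mul t (hpow y n) ∈ T := by
        have := T.mul_mem' (hpow y n) t ht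
        rwa [mul_comm] at this
      exact hadd_mem_ideal h3 (T.mul_mem' b s hs) hu

/-- STATEMENT 10: If the proper hyperideal `T` is `φ`-primary but not primary,
then `T² ⊆ φ(T)`. -/
theorem phiPrimary_not_primary_sq_subset {R : Type u} [KrasnerHyperring R]
    (φ : Hyperideal R → Set R) (hφ : MapsToIdealOrEmpty φ)
    (T : Hyperideal R) (hT : IsPhiPrimary φ T) (hnp : ¬ IsPrimary T) :
    idealPow T 2 ⊆ φ T := by
  obtain ⟨hprop, hprim⟩ := hT
  -- extract a counterexample to primality
  have hcex : ∃ a b : R, mul a b ∈ T ∧ a ∉ T ∧ ∀ k : ℕ, 0 < k → hpow b k ∉ T := by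
    by_contra hc
    push_neg at hc
    exact hnp ⟨hprop, fun a b hab => by
      rcases Classical.em (a ∈ T) with h | h
      · exact Or.inl h
      · obtain ⟨k, hk, hbk⟩ := hc a b hab h
        exact Or.inr ⟨k, hk, hbk⟩⟩
  obtain ⟨a, b, hab, haT, hbT⟩ := hcex
  -- a∘b ∈ φ(T)
  have habφ : mul a b ∈ φ T := by
    by_contra h
    rcases hprim a b hab h with h' | ⟨k, hk, hbk⟩
    · exact haT h'
    · exact hbT k hk hbk
  -- φ T is a hyperideal J
  have hne : φ T ≠ ∅ := fun h => (h ▸ habφ : mul a b ∈ (∅ : Set R))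
  obtain ⟨J, hJ⟩ := (hφ T).resolve_left hne
  -- Key claim: for p,q ∈ T, x ∈ a⊕p, y ∈ b⊕q, we get x∘y ∈ φ T
  have key : ∀ p ∈ T, ∀ q ∈ T, ∀ x ∈ hadd a p, ∀ y ∈ hadd b q, mul x y ∈ φ T := by
    intro p hp q hq x hx y hy
    -- x∘y ∈ T
    have hxb : mul x b ∈ T := by
      have h1 : mul b x ∈ hadd (mul b a) (mul b p) := mul_mem_hadd_of_mem hx
      have : mul b x ∈ T :=
        hadd_mem_ideal (by rwa [mul_comm b a]) (T.mul_mem' b p hp) h1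
      rwa [mul_comm] at this
    have hxyT : mul x y ∈ T := by
      have h1 : mul x y ∈ hadd (mul x b) (mul x q) := mul_mem_hadd_of_mem hy
      exact hadd_mem_ideal hxb (T.mul_mem' x q hq) h1
    by_contra hxyφ
    rcases hprim x y hxyT hxyφ with hxT | ⟨k, hk, hyk⟩
    · -- then a ∈ T, contradiction
      have hx' : x ∈ hadd p a := by rwa [hadd_comm] at hx
      have : a ∈ hadd (neg p) x := reversible p a x hx'
      exact haT (hadd_mem_ideal (T.neg_mem' p hp) hxT this)
    · -- then b^k ∈ T, contradiction
      have hy' : y ∈ hadd q b := by rwa [hadd_comm] at hy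
      have hb : b ∈ hadd (neg q) y := reversible q b y hy'
      have hb' : b ∈ hadd y (neg q) := by rwa [hadd_comm] at hb
      obtain ⟨s, hs, hbk⟩ := hpow_mem_hadd_pow (T.neg_mem' q hq) hb' k
      exact hbT k hk (hadd_mem_ideal hyk hs hbk)
  -- main claim: T∘T ⊆ J
  have main : ∀ p ∈ T, ∀ q ∈ T, mul p q ∈ J := by
    intro p hp q hq
    obtain ⟨x, hx⟩ := hadd_nonempty a p
    obtain ⟨y, hy⟩ := hadd_nonempty b q
    have hxyJ : mul x y ∈ J := by have := key p hp q hq x hx y hy; rwa [hJ] at this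
    have hayJ : mul a y ∈ J := by
      have h0 : a ∈ hadd a zero := by rw [hadd_zero]; exact rfl
      have := key zero (zero_mem T) q hq a h0 y hy; rwa [hJ] at this
    have hxbJ : mul x b ∈ J := by
      have h0 : b ∈ hadd b zero := by rw [hadd_zero]; exact rfl
      have := key p hp zero (zero_mem T) x hx b h0; rwa [hJ] at this
    have habJ : mul a b ∈ J := by rwa [hJ] at habφ
    -- p ∈ (-a) ⊕ x, q ∈ (-b) ⊕ y
    have hpmem : p ∈ hadd (neg a) x := reversible a p x hx
    have hqmem : q ∈ hadd (neg b) y := reversible b q y hy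
    -- p∘b ∈ J
    have hpbJ : mul p b ∈ J := by
      have h1 : mul b p ∈ hadd (mul b (neg a)) (mul b x) := mul_mem_hadd_of_mem hpmem
      have h2 : mul b (neg a) ∈ J := by
        rw [mul_neg_eq, mul_comm b a]; exact J.neg_mem' _ habJ
      have h3 : mul b x ∈ J := by rwa [mul_comm x b] at hxbJ
      have : mul b p ∈ J := hadd_mem_ideal h2 h3 h1
      rwa [mul_comm] at this
    -- p∘y ∈ J
    have hpyJ : mul p y ∈ J := by
      have h1 : mul y p ∈ hadd (mul y (neg a)) (mul y x) := mul_mem_hadd_of_mem hpmem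
      have h2 : mul y (neg a) ∈ J := by
        rw [mul_neg_eq, mul_comm y a]; exact J.neg_mem' _ hayJ
      have h3 : mul y x ∈ J := by rwa [mul_comm x y] at hxyJ
      have : mul y p ∈ J := hadd_mem_ideal h2 h3 h1
      rwa [mul_comm] at this
    -- finally p∘q ∈ J
    have h1 : mul p q ∈ hadd (mul p (neg b)) (mul p y) := mul_mem_hadd_of_mem hqmem
    have h2 : mul p (neg b) ∈ J := by rw [mul_neg_eq]; exact J.neg_mem' _ hpbJ
    exact hadd_mem_ideal h2 hpyJ h1
  -- conclude
  rw [hJ]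
  intro z hz
  have hsub : setPow (↑T) 2 ⊆ (J : Set R) := by
    rintro w ⟨p, hp, q, hq, rfl⟩
    exact main p hp q hq
  exact hz (J : Set R) ⟨⟨J, rfl⟩, hsub⟩

end KrasnerHyperring
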